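/- Ping-pong lemma for amalgamated products: Let A, B be subgroups of a group G, let C = A ∩ B, and suppose [A : C] > 2 and [B : C] ≥ 2. Suppose G acts on a set X containing two disjoint non-empty subsets X_A, X_B such that for all a ∈ A \ C, b ∈ B \ C, c ∈ C one has a·X_B ⊆ X_A, b·X_A ⊆ X_B, c·X_A ⊆ X_A, and c·X_B ⊆ X_B. Then the subgroup ⟨A, B⟩ of G is canonically isomorphic to the amalgamated free product A *_C B. -/

import Mathlib

variable {G : Type*} [Group G]

/-- The two-element family of groups `A`, `B` (indexed by `Bool`). -/
def pingpongFam (A B : Subgroup G) : Bool → Type _ := fun b => cond b (↥A) (↥B)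

instance (A B : Subgroup G) : ∀ b, Group (pingpongFam A B b) := fun b => by
  cases b <;> · dsimp [pingpongFam]; infer_instance

/-- The inclusions of `C = A ⊓ B` into `A` and `B`. -/
def pingpongBase (A B : Subgroup G) : ∀ b, ↥(A ⊓ B) →* pingpongFam A B b := fun b =>
  match b with
  | true => Subgroup.inclusion inf_le_left
  | false => Subgroup.inclusion inf_le_right

/-- The inclusions of `A` and `B` into `G`. -/
def pingpongIncl (A B : Subgroup G) : ∀ b, pingpongFam A B b →* G := fun b =>
  match b with
  | true => A.subtype
  | false => B.subtype

theorem pingpongCompat (A B : Subgroup G) :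
    ∀ b, (pingpongIncl A B b).comp (pingpongBase A B b) = (A ⊓ B).subtype := fun b => by
  cases b <;> rfl

section AltSection

variable {A B : Subgroup G}

/-- Alternating products of elements of `A \ C` and `B \ C`, `C = A ⊓ B`.
First index: type of first letter (`true` = `A`), second: type of last letter. -/
inductive PPAlt (A B : Subgroup G) : Bool → Bool → G → Prop
  | singleA {a : G} (ha : a ∈ A) (ha' : a ∉ A ⊓ B) : PPAlt A B true true a
  | singleB {b : G} (hb : b ∈ B) (hb' : b ∉ A ⊓ B) : PPAlt A B false false b
  | consA {a g : G} {e : Bool} (ha : a ∈ A) (ha' : a ∉ A ⊓ B) (h : PPAlt A B false e g) :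
      PPAlt A B true e (a * g)
  | consB {b g : G} {e : Bool} (hb : b ∈ B) (hb' : b ∉ A ⊓ B) (h : PPAlt A B true e g) :
      PPAlt A B false e (b * g)

theorem ppalt_base_mul {c g : G} {s e : Bool} (hc : c ∈ A ⊓ B) (h : PPAlt A B s e g) :
    PPAlt A B s e (c * g) := by
  induction h with
  | singleA ha ha' =>
      exact .singleA (mul_mem hc.1 ha) (fun hm => ha' (by simpa using mul_mem (inv_mem hc) hm))
  | singleB hb hb' =>
      exact .singleB (mul_mem hc.2 hb) (fun hm => hb' (by simpa using mul_mem (inv_mem hc) hm))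
  | consA ha ha' h ih =>
      rw [← mul_assoc]
      exact .consA (mul_mem hc.1 ha) (fun hm => ha' (by simpa using mul_mem (inv_mem hc) hm)) h
  | consB hb hb' h ih =>
      rw [← mul_assoc]
      exact .consB (mul_mem hc.2 hb) (fun hm => hb' (by simpa using mul_mem (inv_mem hc) hm)) h

theorem ppalt_mul_base {c g : G} {s e : Bool} (hc : c ∈ A ⊓ B) (h : PPAlt A B s e g) :
    PPAlt A B s e (g * c) := by
  induction h with
  | singleA ha ha' =>
      exact .singleA (mul_mem ha hc.1) (fun hm => ha' (by simpa using mul_mem hm (inv_mem hc)))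
  | singleB hb hb' =>
      exact .singleB (mul_mem hb hc.2) (fun hm => hb' (by simpa using mul_mem hm (inv_mem hc)))
  | consA ha ha' h ih => rw [mul_assoc]; exact .consA ha ha' ih
  | consB hb hb' h ih => rw [mul_assoc]; exact .consB hb hb' ih

theorem ppalt_snocA {s e : Bool} {g a : G} (h : PPAlt A B s e g) (he : e = false)
    (ha : a ∈ A) (ha' : a ∉ A ⊓ B) : PPAlt A B s true (g * a) := by
  induction h with
  | singleA _ _ => simp at he
  | singleB hb hb' => exact .consB hb hb' (.singleA ha ha')
  | consA ha₂ ha₂' h ih => rw [mul_assoc]; exact .consA ha₂ ha₂' (ih he)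
  | consB hb hb' h ih => rw [mul_assoc]; exact .consB hb hb' (ih he)

theorem ppalt_lastA {s e : Bool} {g : G} (h : PPAlt A B s e g) (he : e = true) :
    ∃ g' a, a ∈ A ∧ a ∉ A ⊓ B ∧ g = g' * a ∧
      ((g' = 1 ∧ s = true) ∨ PPAlt A B s false g') := by
  induction h with
  | @singleA a ha ha' => exact ⟨1, a, ha, ha', (one_mul _).symm, Or.inl ⟨rfl, rfl⟩⟩
  | singleB _ _ => simp at he
  | @consA a g e ha ha' h ih =>
      obtain ⟨g', a', h1, h2, h3, h4⟩ := ih he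
      rcases h4 with ⟨rfl, hs⟩ | h4
      · simp at hs
      · exact ⟨a * g', a', h1, h2, by rw [h3, mul_assoc], Or.inr (.consA ha ha' h4)⟩
  | @consB b g e hb hb' h ih =>
      obtain ⟨g', a', h1, h2, h3, h4⟩ := ih he
      rcases h4 with ⟨rfl, hs⟩ | h4
      · refine ⟨b, a', h1, h2, by rw [h3, one_mul], Or.inr (.singleB hb hb')⟩
      · exact ⟨b * g', a', h1, h2, by rw [h3, mul_assoc], Or.inr (.consB hb hb' h4)⟩

variable {X : Type*} [MulAction G X] {XA XB : Set X}

theorem ppalt_smul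
    (hA : ∀ a ∈ A, a ∉ A ⊓ B → ∀ x ∈ XB, a • x ∈ XA)
    (hB : ∀ b ∈ B, b ∉ A ⊓ B → ∀ x ∈ XA, b • x ∈ XB)
    {s e : Bool} {g : G} (h : PPAlt A B s e g) :
    ∀ x ∈ (cond e XB XA), g • x ∈ (cond s XA XB) := by
  induction h with
  | singleA ha ha' => exact fun x hx => hA _ ha ha' x hx
  | singleB hb hb' => exact fun x hx => hB _ hb hb' x hx
  | consA ha ha' h ih => intro x hx; rw [mul_smul]; exact hA _ ha ha' _ (ih x hx)
  | consB hb hb' h ih => intro x hx; rw [mul_smul]; exact hB _ hb hb' _ (ih x hx)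

theorem ppalt_same_ne_one
    (hXA : XA.Nonempty) (hXB : XB.Nonempty) (hdisj : Disjoint XA XB)
    (hA : ∀ a ∈ A, a ∉ A ⊓ B → ∀ x ∈ XB, a • x ∈ XA)
    (hB : ∀ b ∈ B, b ∉ A ⊓ B → ∀ x ∈ XA, b • x ∈ XB)
    {s : Bool} {g : G} (h : PPAlt A B s s g) : g ≠ 1 := by
  intro hg1
  cases s with
  | true =>
      obtain ⟨x, hx⟩ := hXB
      have := ppalt_smul hA hB h x hx
      rw [hg1, one_smul] at this
      exact Set.disjoint_left.1 hdisj this hx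
  | false =>
      obtain ⟨x, hx⟩ := hXA
      have := ppalt_smul hA hB h x hx
      rw [hg1, one_smul] at this
      exact Set.disjoint_left.1 hdisj hx this

theorem pp_pick {a₁ a₂ a₃ : G} (ha₁ : a₁ ∈ A) (ha₂ : a₂ ∈ A) (ha₃ : a₃ ∈ A)
    (ha₁₂ : a₁⁻¹ * a₂ ∉ A ⊓ B) (ha₁₃ : a₁⁻¹ * a₃ ∉ A ⊓ B) (ha₂₃ : a₂⁻¹ * a₃ ∉ A ⊓ B)
    (z : G) : ∃ t, t ∈ A ∧ t ∉ A ⊓ B ∧ t * z ∉ A ⊓ B := by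
  by_contra hc
  push_neg at hc
  have f : ∀ i j : G, i⁻¹ * z ∈ A ⊓ B → j⁻¹ * z ∈ A ⊓ B → i⁻¹ * j ∈ A ⊓ B := by
    intro i j hi hj
    have := mul_mem hi (inv_mem hj)
    convert this using 1
    group
  have fg : ∀ i j : G, i⁻¹ ∈ A ⊓ B → j⁻¹ ∈ A ⊓ B → i⁻¹ * j ∈ A ⊓ B := by
    intro i j hi hj
    have := mul_mem hi (inv_mem hj)
    simpa using this
  have d1 : a₁⁻¹ ∈ A ⊓ B ∨ a₁⁻¹ * z ∈ A ⊓ B := or_iff_not_imp_left.mpr (hc a₁⁻¹ (inv_mem ha₁))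
  have d2 : a₂⁻¹ ∈ A ⊓ B ∨ a₂⁻¹ * z ∈ A ⊓ B := or_iff_not_imp_left.mpr (hc a₂⁻¹ (inv_mem ha₂))
  have d3 : a₃⁻¹ ∈ A ⊓ B ∨ a₃⁻¹ * z ∈ A ⊓ B := or_iff_not_imp_left.mpr (hc a₃⁻¹ (inv_mem ha₃))
  rcases d1 with d1 | d1 <;> rcases d2 with d2 | d2 <;> rcases d3 with d3 | d3
  all_goals first
    | exact ha₁₂ (fg _ _ d1 d2) | exact ha₁₂ (f _ _ d1 d2)
    | exact ha₁₃ (fg _ _ d1 d3) | exact ha₁₃ (f _ _ d1 d3)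
    | exact ha₂₃ (fg _ _ d2 d3) | exact ha₂₃ (f _ _ d2 d3)

theorem ppalt_ne_one
    (hXA : XA.Nonempty) (hXB : XB.Nonempty) (hdisj : Disjoint XA XB)
    (hA : ∀ a ∈ A, a ∉ A ⊓ B → ∀ x ∈ XB, a • x ∈ XA)
    (hB : ∀ b ∈ B, b ∉ A ⊓ B → ∀ x ∈ XA, b • x ∈ XB)
    {a₁ a₂ a₃ : G} (ha₁ : a₁ ∈ A) (ha₂ : a₂ ∈ A) (ha₃ : a₃ ∈ A)
    (ha₁₂ : a₁⁻¹ * a₂ ∉ A ⊓ B) (ha₁₃ : a₁⁻¹ * a₃ ∉ A ⊓ B) (ha₂₃ : a₂⁻¹ * a₃ ∉ A ⊓ B)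
    {s e : Bool} {g : G} (h : PPAlt A B s e g) : g ≠ 1 := by
  match s, e, h with
  | true, true, h => exact ppalt_same_ne_one hXA hXB hdisj hA hB h
  | false, false, h => exact ppalt_same_ne_one hXA hXB hdisj hA hB h
  | true, false, h =>
      cases h with
      | @consA a g' _ ha ha' h' =>
        obtain ⟨t, ht, ht', htz⟩ := pp_pick ha₁ ha₂ ha₃ ha₁₂ ha₁₃ ha₂₃ a
        have halt : PPAlt A B true true (t * a * (g' * t⁻¹)) :=
          .consA (mul_mem ht ha) htz
            (ppalt_snocA h' rfl (inv_mem ht) (fun hm => ht' (by simpa using inv_mem hm)))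
        intro hg1
        apply ppalt_same_ne_one hXA hXB hdisj hA hB halt
        have : t * (a * g') * t⁻¹ = t * a * (g' * t⁻¹) := by group
        rw [← this, hg1]
        group
  | false, true, h =>
      obtain ⟨g', a, haA, ha', hga, hrest⟩ := ppalt_lastA h rfl
      rcases hrest with ⟨_, hs⟩ | hrest
      · simp at hs
      obtain ⟨t, ht, ht', htz⟩ := pp_pick ha₁ ha₂ ha₃ ha₁₂ ha₁₃ ha₂₃ a⁻¹
      have hat : a * t⁻¹ ∉ A ⊓ B := fun hm => htz (by simpa using inv_mem hm)
      have halt : PPAlt A B true true (t * (g' * (a * t⁻¹))) :=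
        .consA ht ht' (ppalt_snocA hrest rfl (mul_mem haA (inv_mem ht)) hat)
      intro hg1
      apply ppalt_same_ne_one hXA hXB hdisj hA hB halt
      have : t * g * t⁻¹ = t * (g' * (a * t⁻¹)) := by rw [hga]; group
      rw [← this, hg1]
      group

theorem ppincl_mem_notC {i : Bool} (g : pingpongFam A B i)
    (hg : g ∉ (pingpongBase A B i).range) : pingpongIncl A B i g ∉ A ⊓ B := by
  cases i with
  | true => exact fun hm => hg ⟨⟨A.subtype g, hm⟩, Subtype.ext rfl⟩
  | false => exact fun hm => hg ⟨⟨B.subtype g, hm⟩, Subtype.ext rfl⟩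

theorem ppincl_alt_single {i : Bool} (g : pingpongFam A B i)
    (hg : g ∉ (pingpongBase A B i).range) :
    PPAlt A B i i (pingpongIncl A B i g) := by
  cases i with
  | true => exact .singleA (g : ↥A).2 (ppincl_mem_notC g hg)
  | false => exact .singleB (g : ↥B).2 (ppincl_mem_notC g hg)

theorem ppincl_alt_cons {i e : Bool} (g : pingpongFam A B i)
    (hg : g ∉ (pingpongBase A B i).range) {x : G} (h : PPAlt A B (!i) e x) :
    PPAlt A B i e (pingpongIncl A B i g * x) := by
  cases i with
  | true => exact .consA (g : ↥A).2 (ppincl_mem_notC g hg) h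
  | false => exact .consB (g : ↥B).2 (ppincl_mem_notC g hg) h

end AltSection

/-- **Ping-pong lemma for amalgamated products.** If `[A : A ⊓ B] > 2`,
`[B : A ⊓ B] ≥ 2`, and `G` acts on a set `X` with disjoint non-empty subsets
`X_A`, `X_B` satisfying the ping-pong conditions, then the canonical map from the
amalgamated free product `A *_{A ⊓ B} B` (the pushout of the inclusions of
`A ⊓ B` into `A` and `B`) to `G` is injective, with image `⟨A, B⟩`. -/
theorem stmt_15 (A B : Subgroup G)
    -- `[A : A ⊓ B] > 2`: three elements of `A` in pairwise distinct `(A ⊓ B)`-cosets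
    (a₁ a₂ a₃ : G) (ha₁ : a₁ ∈ A) (ha₂ : a₂ ∈ A) (ha₃ : a₃ ∈ A)
    (ha₁₂ : a₁⁻¹ * a₂ ∉ A ⊓ B) (ha₁₃ : a₁⁻¹ * a₃ ∉ A ⊓ B) (ha₂₃ : a₂⁻¹ * a₃ ∉ A ⊓ B)
    -- `[B : A ⊓ B] ≥ 2`: an element of `B` outside `A ⊓ B`
    (b₀ : G) (hb₀ : b₀ ∈ B) (hb₀' : b₀ ∉ A ⊓ B)
    (X : Type*) [MulAction G X] (XA XB : Set X)
    (hXA : XA.Nonempty) (hXB : XB.Nonempty) (hdisj : Disjoint XA XB)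
    (hA : ∀ a ∈ A, a ∉ A ⊓ B → ∀ x ∈ XB, a • x ∈ XA)
    (hB : ∀ b ∈ B, b ∉ A ⊓ B → ∀ x ∈ XA, b • x ∈ XB)
    (hCA : ∀ c ∈ A ⊓ B, ∀ x ∈ XA, c • x ∈ XA)
    (hCB : ∀ c ∈ A ⊓ B, ∀ x ∈ XB, c • x ∈ XB) :
    Function.Injective
      ⇑(Monoid.PushoutI.lift (pingpongIncl A B) (A ⊓ B).subtype (pingpongCompat A B)) ∧
    (Monoid.PushoutI.lift (pingpongIncl A B) (A ⊓ B).subtype (pingpongCompat A B)).range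
      = Subgroup.closure (↑A ∪ ↑B) := by
  classical
  set F := Monoid.PushoutI.lift (pingpongIncl A B) (A ⊓ B).subtype (pingpongCompat A B) with hFdef
  have hφinj : ∀ i, Function.Injective (pingpongBase A B i) := by
    intro i
    cases i
    · exact Subgroup.inclusion_injective inf_le_right
    · exact Subgroup.inclusion_injective inf_le_left
  obtain ⟨d⟩ := Monoid.PushoutI.NormalWord.transversal_nonempty (pingpongBase A B) hφinj
  have key : ∀ g : Monoid.PushoutI (pingpongBase A B), F g = 1 → g = 1 := by
    intro g hg
    have hmot : ∀ w : Monoid.PushoutI.NormalWord d,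
        (∃ h : ↥(A ⊓ B), w.prod = Monoid.PushoutI.base (pingpongBase A B) h) ∨
        (∃ s e : Bool, w.fstIdx = some s ∧ PPAlt A B s e (F w.prod)) := by
      intro w
      induction w using Monoid.PushoutI.NormalWord.consRecOn with
      | empty => exact Or.inl ⟨1, by simp⟩
      | cons i x w hmw hgn hgr hw1 ih =>
        right
        have hfst : (Monoid.PushoutI.NormalWord.cons x w hmw hgr).fstIdx = some i := by
          simp [Monoid.PushoutI.NormalWord.cons, Monoid.CoprodI.Word.cons,
            Monoid.CoprodI.Word.fstIdx]
        have hprod : F ((Monoid.PushoutI.NormalWord.cons x w hmw hgr).prod)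
            = pingpongIncl A B i x * F w.prod := by
          rw [Monoid.PushoutI.NormalWord.prod_cons, map_mul, Monoid.PushoutI.lift_of]
        rcases ih with ⟨h, hh⟩ | ⟨s, e, hse, halt⟩
        · refine ⟨i, i, hfst, ?_⟩
          rw [hprod, hh, Monoid.PushoutI.lift_base]
          exact ppalt_mul_base h.2 (ppincl_alt_single x hgr)
        · refine ⟨i, e, hfst, ?_⟩
          rw [hprod]
          have hs : s = !i := by
            have : s ≠ i := fun hsi => hmw (hsi ▸ hse)
            cases s <;> cases i <;> simp_all
          exact ppincl_alt_cons x hgr (hs ▸ halt)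
      | base h w hw1 ih =>
        have hfst : (Monoid.PushoutI.base (pingpongBase A B) h • w).fstIdx = w.fstIdx := by
          rw [Monoid.PushoutI.NormalWord.base_smul_def]
        have hprod : (Monoid.PushoutI.base (pingpongBase A B) h • w).prod
            = Monoid.PushoutI.base (pingpongBase A B) h * w.prod :=
          Monoid.PushoutI.NormalWord.prod_smul _ _
        rcases ih with ⟨h', hh⟩ | ⟨s, e, hse, halt⟩
        · exact Or.inl ⟨h * h', by rw [hprod, hh, map_mul]⟩
        · refine Or.inr ⟨s, e, by rw [hfst]; exact hse, ?_⟩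
          rw [hprod, map_mul, Monoid.PushoutI.lift_base]
          exact ppalt_base_mul h.2 halt
    have hw : (g • Monoid.PushoutI.NormalWord.empty : Monoid.PushoutI.NormalWord d).prod = g := by
      rw [Monoid.PushoutI.NormalWord.prod_smul, Monoid.PushoutI.NormalWord.prod_empty, mul_one]
    rcases hmot (g • Monoid.PushoutI.NormalWord.empty) with ⟨h, hh⟩ | ⟨s, e, _, halt⟩
    · rw [hw] at hh
      subst hh
      rw [Monoid.PushoutI.lift_base] at hg
      have h1 : h = 1 := by
        ext
        simpa using hg
      rw [h1, map_one]
    · rw [hw] at halt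
      exact absurd hg
        (ppalt_ne_one hXA hXB hdisj hA hB ha₁ ha₂ ha₃ ha₁₂ ha₁₃ ha₂₃ halt)
  refine ⟨(injective_iff_map_eq_one F).2 key, ?_⟩
  apply le_antisymm
  · rintro x ⟨g, rfl⟩
    induction g using Monoid.PushoutI.induction_on with
    | of i x =>
      rw [Monoid.PushoutI.lift_of]
      cases i
      · exact Subgroup.subset_closure (Or.inr (x : ↥B).2)
      · exact Subgroup.subset_closure (Or.inl (x : ↥A).2)
    | base h =>
      rw [Monoid.PushoutI.lift_base]
      exact Subgroup.subset_closure (Or.inl h.2.1)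
    | mul x y ihx ihy =>
      rw [map_mul]
      exact mul_mem ihx ihy
  · rw [Subgroup.closure_le]
    rintro x (hx | hx)
    · exact ⟨Monoid.PushoutI.of true ⟨x, hx⟩, Monoid.PushoutI.lift_of _ _ _ _⟩
    · exact ⟨Monoid.PushoutI.of false ⟨x, hx⟩, Monoid.PushoutI.lift_of _ _ _ _⟩
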